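/- Every graph obtained from the double wheel DW_5 by adding a single new edge contains K_{3,3}+v as a minor. -/
import Mathlib


/-- `K₃,₃ + v`: `K₃,₃` with parts `{0,1,2}`, `{3,4,5}`, plus a new vertex `6`
adjacent to the 4-cycle `0,3,1,4`. -/
def K33v : SimpleGraph (Fin 7) :=
  SimpleGraph.fromEdgeSet
    {s(0,3), s(0,4), s(0,5), s(1,3), s(1,4), s(1,5), s(2,3), s(2,4), s(2,5),
     s(6,0), s(6,3), s(6,1), s(6,4)}

/-- A graph is 4-connected if it has at least 5 vertices and deleting any
set of at most 3 vertices leaves it connected. -/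
def FourConnected {V : Type*} (G : SimpleGraph V) : Prop :=
  5 ≤ Nat.card V ∧
  ∀ S : Set V, S.Finite → S.ncard ≤ 3 → (G.induce Sᶜ).Connected

/-- `H` is a minor of `G`: there are nonempty, pairwise disjoint, connected
branch sets in `G`, one for each vertex of `H`, with an edge of `G` between
the branch sets of every pair of adjacent vertices of `H`. -/
def IsMinor {α β : Type*} (H : SimpleGraph α) (G : SimpleGraph β) : Prop :=
  ∃ φ : α → Set β,
    (∀ x, (φ x).Nonempty) ∧
    (∀ x, (G.induce (φ x)).Connected) ∧
    (Pairwise fun x y => Disjoint (φ x) (φ y)) ∧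
    ∀ x y, H.Adj x y → ∃ u ∈ φ x, ∃ w ∈ φ y, G.Adj u w

/-- The double wheel `DW n`: a cycle on `Fin n` plus two adjacent hubs
joined to all cycle vertices. -/
def DW (n : ℕ) : SimpleGraph (Fin n ⊕ Fin 2) :=
  SimpleGraph.fromRel fun u v =>
    match u, v with
    | Sum.inl i, Sum.inl j => (i.val + 1) % n = j.val
    | Sum.inl _, Sum.inr _ => True
    | Sum.inr _, Sum.inl _ => True
    | Sum.inr _, Sum.inr _ => True

/-- The square of the `n`-cycle: `i ~ j` iff `i - j ≡ ±1, ±2 (mod n)`. -/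
def CycleSq (n : ℕ) : SimpleGraph (ZMod n) :=
  SimpleGraph.fromRel fun i j => i - j = 1 ∨ i - j = 2

/-- `G'` is obtained from `G` by the 4-split of `v` with sets `A`, `B`:
`A ∪ B = N(v)`, `|A|,|B| ≥ 3`, and `G'` consists of a copy of `G - v`
(via `f`) together with two new adjacent vertices `a`, `b` where `a` is
additionally adjacent exactly to `A` and `b` exactly to `B`. -/
def IsFourSplitOn {V W : Type*} (G : SimpleGraph V) (v : V) (A B : Set V)
    (G' : SimpleGraph W) : Prop :=
  A ∪ B = G.neighborSet v ∧ 3 ≤ A.ncard ∧ 3 ≤ B.ncard ∧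
  ∃ (f : {u : V // u ≠ v} → W) (a b : W),
    Function.Injective f ∧ a ≠ b ∧
    (∀ u, f u ≠ a) ∧ (∀ u, f u ≠ b) ∧
    (∀ w : W, w = a ∨ w = b ∨ ∃ u, f u = w) ∧
    G'.Adj a b ∧
    (∀ u u' : {u : V // u ≠ v}, G'.Adj (f u) (f u') ↔ G.Adj u.1 u'.1) ∧
    (∀ u : {u : V // u ≠ v}, G'.Adj a (f u) ↔ u.1 ∈ A) ∧
    (∀ u : {u : V // u ≠ v}, G'.Adj b (f u) ↔ u.1 ∈ B)

/-- `G'` is obtained from `G` by a 4-split of the vertex `v`. -/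
def IsFourSplit {V W : Type*} (G : SimpleGraph V) (v : V)
    (G' : SimpleGraph W) : Prop :=
  ∃ A B : Set V, IsFourSplitOn G v A B G'

/-- The graph `Γ₁`: vertices `v₁,…,v₅ = 0,…,4`, `a = 5`, `b = 6`;
4-cycle `v₁v₂v₃v₄`, `v₅` adjacent to `v₁,v₂,v₃,v₄`, `a` adjacent to
`v₁,v₃,v₅,b`, and `b` adjacent to `v₂,v₃,v₄,a`. -/
def Gamma1 : SimpleGraph (Fin 7) :=
  SimpleGraph.fromEdgeSet
    {s(0,1), s(1,2), s(2,3), s(3,0),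
     s(4,0), s(4,1), s(4,2), s(4,3),
     s(5,0), s(5,2), s(5,4), s(5,6),
     s(6,1), s(6,2), s(6,3)}


section Aux

instance K33v.adjDec (x y : Fin 7) : Decidable (K33v.Adj x y) :=
  decidable_of_iff
    (s(x,y) ∈ ({s(0,3), s(0,4), s(0,5), s(1,3), s(1,4), s(1,5), s(2,3), s(2,4),
      s(2,5), s(6,0), s(6,3), s(6,1), s(6,4)} : Finset (Sym2 (Fin 7))) ∧ x ≠ y)
    (by simp [K33v, SimpleGraph.fromEdgeSet_adj])

/-- Boolean form of the `DW 5` relation. -/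
def dwRel (u v : Fin 5 ⊕ Fin 2) : Bool :=
  match u, v with
  | .inl i, .inl j => (i.1 + 1) % 5 == j.1
  | _, _ => true

instance DW5.adjDec (u v : Fin 5 ⊕ Fin 2) : Decidable ((DW 5).Adj u v) :=
  decidable_of_iff (u ≠ v ∧ (dwRel u v ∨ dwRel v u))
    (by rw [DW, SimpleGraph.fromRel_adj]
        cases u <;> cases v <;> simp [dwRel])

instance chordDec (a b u v : Fin 5 ⊕ Fin 2) :
    Decidable ((DW 5 ⊔ SimpleGraph.fromEdgeSet {s(a,b)}).Adj u v) :=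
  decidable_of_iff ((DW 5).Adj u v ∨ (s(u,v) = s(a,b) ∧ u ≠ v))
    (by rw [SimpleGraph.sup_adj, SimpleGraph.fromEdgeSet_adj]; simp)

/-- If `K33v` maps injectively into `G` preserving adjacency, then it is a
minor of `G` via singleton branch sets. -/
lemma singleton_minor {β : Type*} (G : SimpleGraph β) (f : Fin 7 → β)
    (hinj : Function.Injective f)
    (hadj : ∀ x y : Fin 7, K33v.Adj x y → G.Adj (f x) (f y)) :
    IsMinor K33v G := by
  refine ⟨fun x => {f x}, fun x => ⟨f x, rfl⟩, ?_, ?_, ?_⟩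
  · intro x
    have hne : Nonempty ({f x} : Set β) := ⟨⟨f x, rfl⟩⟩
    refine ⟨fun a b => ?_⟩
    have : a = b := Subtype.ext (a.2.trans b.2.symm)
    exact this ▸ SimpleGraph.Reachable.refl _
  · intro x y hxy
    exact Set.disjoint_singleton.mpr fun hfe => hxy (hinj hfe)
  · intro x y hxy
    exact ⟨f x, rfl, f y, rfl, hadj x y hxy⟩

/-- The key case: adding the chord `{i, i+2}` to `DW 5` yields a graph
containing `K33v` as a (singleton-branch-set) minor. -/
lemma chord_minor (a b : Fin 5) (f : Fin 7 → Fin 5 ⊕ Fin 2)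
    (hinj : Function.Injective f)
    (hadj : ∀ x y : Fin 7, K33v.Adj x y →
      (DW 5 ⊔ SimpleGraph.fromEdgeSet {s(Sum.inl a, Sum.inl b)}).Adj (f x) (f y)) :
    IsMinor K33v (DW 5 ⊔ SimpleGraph.fromEdgeSet {s(Sum.inl a, Sum.inl b)}) :=
  singleton_minor _ f hinj hadj

end Aux

/-- Every graph obtained from `DW₅` by adding a single new edge contains
`K₃,₃ + v` as a minor. -/
theorem stmt_13 (u w : Fin 5 ⊕ Fin 2) (hne : u ≠ w) (h : ¬ (DW 5).Adj u w) :
    IsMinor K33v (DW 5 ⊔ SimpleGraph.fromEdgeSet {s(u, w)}) := by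
  rcases u with i | i <;> rcases w with j | j
  · fin_cases i <;> fin_cases j
    · exact absurd rfl hne
    · exact absurd (by decide) h
    · exact chord_minor 0 2 ![.inl 0, .inl 3, .inl 1, .inr 0, .inr 1, .inl 2, .inl 4] (by decide) (by decide)
    · exact chord_minor 0 3 ![.inl 3, .inl 1, .inl 4, .inr 0, .inr 1, .inl 0, .inl 2] (by decide) (by decide)
    · exact absurd (by decide) h
    · exact absurd (by decide) h
    · exact absurd rfl hne
    · exact absurd (by decide) h
    · exact chord_minor 1 3 ![.inl 1, .inl 4, .inl 2, .inr 0, .inr 1, .inl 3, .inl 0] (by decide) (by decide)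
    · exact chord_minor 1 4 ![.inl 4, .inl 2, .inl 0, .inr 0, .inr 1, .inl 1, .inl 3] (by decide) (by decide)
    · exact chord_minor 2 0 ![.inl 0, .inl 3, .inl 1, .inr 0, .inr 1, .inl 2, .inl 4] (by decide) (by decide)
    · exact absurd (by decide) h
    · exact absurd rfl hne
    · exact absurd (by decide) h
    · exact chord_minor 2 4 ![.inl 2, .inl 0, .inl 3, .inr 0, .inr 1, .inl 4, .inl 1] (by decide) (by decide)
    · exact chord_minor 3 0 ![.inl 3, .inl 1, .inl 4, .inr 0, .inr 1, .inl 0, .inl 2] (by decide) (by decide)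
    · exact chord_minor 3 1 ![.inl 1, .inl 4, .inl 2, .inr 0, .inr 1, .inl 3, .inl 0] (by decide) (by decide)
    · exact absurd (by decide) h
    · exact absurd rfl hne
    · exact absurd (by decide) h
    · exact absurd (by decide) h
    · exact chord_minor 4 1 ![.inl 4, .inl 2, .inl 0, .inr 0, .inr 1, .inl 1, .inl 3] (by decide) (by decide)
    · exact chord_minor 4 2 ![.inl 2, .inl 0, .inl 3, .inr 0, .inr 1, .inl 4, .inl 1] (by decide) (by decide)
    · exact absurd (by decide) h
    · exact absurd rfl hne
  · exact absurd (by simp [DW]) h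
  · exact absurd (by simp [DW]) h
  · fin_cases i <;> fin_cases j
    · exact absurd rfl hne
    · exact absurd (by decide) h
    · exact absurd (by decide) h
    · exact absurd rfl hne
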